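/- Let γ be a bang-bang extremal of the Heisenberg sub-ℓ^∞ problem whose switching functions satisfy φ₃ ≡ a ≠ 0. Then every interior bang arc (one that starts and ends at a switching time) has duration exactly s = (φ₁(t₀) + φ₂(t₀))/|a| = λ₀/|a|, where λ₀ = |φ₁| + |φ₂| is the constant value of the maximized Hamiltonian; in particular all interior arcs have equal length. -/

import Mathlib

open MeasureTheory Set intervalIntegral

private lemma bang_intervalIntegrable (f : ℝ → ℝ) (c : ℝ) (hf : Measurable f)
    (hb : ∀ t, |f t| ≤ c) (s t : ℝ) : IntervalIntegrable f volume s t := by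
  rw [intervalIntegrable_iff]
  refine Integrable.mono' (g := fun _ => c)
    (integrableOn_const measure_Ioc_lt_top.ne) hf.aestronglyMeasurable ?_
  filter_upwards with x using by simpa using hb x

private lemma bang_sign_const (φ : ℝ → ℝ) (τ τ' : ℝ) (h : τ < τ') (hc : Continuous φ)
    (hne : ∀ t ∈ Ioo τ τ', φ t ≠ 0) :
    (∀ t ∈ Ioo τ τ', 0 < φ t) ∨ (∀ t ∈ Ioo τ τ', φ t < 0) := by
  have hm : (τ + τ') / 2 ∈ Ioo τ τ' := by constructor <;> linarith
  rcases (hne _ hm).lt_or_gt with hneg | hpos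
  · right
    intro t ht
    by_contra h'
    have hpos : 0 < φ t := lt_of_le_of_ne (not_lt.1 h') (Ne.symm (hne t ht))
    have h0 : (0 : ℝ) ∈ uIcc (φ ((τ + τ') / 2)) (φ t) := by
      rw [mem_uIcc]; left; exact ⟨hneg.le, hpos.le⟩
    obtain ⟨c, hc', hc0⟩ := intermediate_value_uIcc (hc.continuousOn) h0
    have : c ∈ Ioo τ τ' := (ordConnected_Ioo).uIcc_subset hm ht hc'
    exact hne c this hc0
  · left
    intro t ht
    by_contra h'
    have hneg : φ t < 0 := lt_of_le_of_ne (not_lt.1 h') (hne t ht)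
    have h0 : (0 : ℝ) ∈ uIcc (φ ((τ + τ') / 2)) (φ t) := by
      rw [mem_uIcc]; right; exact ⟨hneg.le, hpos.le⟩
    obtain ⟨c, hc', hc0⟩ := intermediate_value_uIcc (hc.continuousOn) h0
    have : c ∈ Ioo τ τ' := (ordConnected_Ioo).uIcc_subset hm ht hc'
    exact hne c this hc0

theorem heisenberg_interior_bang_arc_length
    (a lam₀ τ τ' : ℝ) (ha : a ≠ 0) (hττ' : τ < τ')
    (φ₁ φ₂ φ₃ u₁ u₂ : ℝ → ℝ)
    (hu₁b : ∀ t, |u₁ t| ≤ 1) (hu₂b : ∀ t, |u₂ t| ≤ 1)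
    (hm₁ : Measurable u₁) (hm₂ : Measurable u₂)
    (hsign₁ : ∀ t, φ₁ t ≠ 0 → u₁ t = Real.sign (φ₁ t))
    (hsign₂ : ∀ t, φ₂ t ≠ 0 → u₂ t = Real.sign (φ₂ t))
    -- switching ODEs in integral form, φ₃ ≡ a
    (hφ₁ : ∀ s t : ℝ, φ₁ t = φ₁ s + ∫ r in s..t, -(u₂ r * φ₃ r))
    (hφ₂ : ∀ s t : ℝ, φ₂ t = φ₂ s + ∫ r in s..t, u₁ r * φ₃ r)
    (hφ₃ : ∀ t, φ₃ t = a)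
    -- the maximized Hamiltonian is constant: |φ₁| + |φ₂| ≡ lam₀
    (hmax : ∀ t, |φ₁ t| + |φ₂ t| = lam₀)
    -- [τ, τ'] is an interior bang arc: it starts and ends at switching times
    -- and contains no switching time in its interior
    (hstart : φ₁ τ = 0 ∨ φ₂ τ = 0)
    (hend : φ₁ τ' = 0 ∨ φ₂ τ' = 0)
    (hreg : ∀ t ∈ Ioo τ τ', φ₁ t ≠ 0 ∧ φ₂ t ≠ 0) :
    τ' - τ = lam₀ / |a| := by
  -- rewrite the ODEs with φ₃ = a
  have hφ₁' : ∀ s t : ℝ, φ₁ t = φ₁ s + ∫ r in s..t, -(u₂ r * a) := by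
    intro s t
    have := hφ₁ s t
    simpa only [hφ₃] using this
  have hφ₂' : ∀ s t : ℝ, φ₂ t = φ₂ s + ∫ r in s..t, u₁ r * a := by
    intro s t
    have := hφ₂ s t
    simpa only [hφ₃] using this
  -- interval integrability
  have hii₁ : ∀ s t : ℝ, IntervalIntegrable (fun r => -(u₂ r * a)) volume s t := by
    intro s t
    refine bang_intervalIntegrable _ |a| ((hm₂.mul measurable_const).neg) (fun r => ?_) s t
    show |-(u₂ r * a)| ≤ |a|
    rw [abs_neg, abs_mul]
    calc |u₂ r| * |a| ≤ 1 * |a| := by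
          exact mul_le_mul_of_nonneg_right (hu₂b r) (abs_nonneg a)
      _ = |a| := one_mul _
  have hii₂ : ∀ s t : ℝ, IntervalIntegrable (fun r => u₁ r * a) volume s t := by
    intro s t
    refine bang_intervalIntegrable _ |a| (hm₁.mul measurable_const) (fun r => ?_) s t
    show |u₁ r * a| ≤ |a|
    rw [abs_mul]
    calc |u₁ r| * |a| ≤ 1 * |a| := by
          exact mul_le_mul_of_nonneg_right (hu₁b r) (abs_nonneg a)
      _ = |a| := one_mul _
  -- continuity of the switching functions
  have hc₁ : Continuous φ₁ := by
    have : φ₁ = fun t => φ₁ τ + ∫ r in τ..t, -(u₂ r * a) := funext fun t => hφ₁' τ t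
    rw [this]
    exact continuous_const.add (intervalIntegral.continuous_primitive hii₁ τ)
  have hc₂ : Continuous φ₂ := by
    have : φ₂ = fun t => φ₂ τ + ∫ r in τ..t, u₁ r * a := funext fun t => hφ₂' τ t
    rw [this]
    exact continuous_const.add (intervalIntegral.continuous_primitive hii₂ τ)
  -- constant signs on the interior
  obtain ⟨ε₁, hε₁, hu₁⟩ : ∃ ε₁ : ℝ, (ε₁ = 1 ∨ ε₁ = -1) ∧ ∀ t ∈ Ioo τ τ', u₁ t = ε₁ := by
    rcases bang_sign_const φ₁ τ τ' hττ' hc₁ (fun t ht => (hreg t ht).1) with hp | hn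
    · exact ⟨1, Or.inl rfl, fun t ht => by
        rw [hsign₁ t (hreg t ht).1, Real.sign_of_pos (hp t ht)]⟩
    · exact ⟨-1, Or.inr rfl, fun t ht => by
        rw [hsign₁ t (hreg t ht).1, Real.sign_of_neg (hn t ht)]⟩
  obtain ⟨ε₂, hε₂, hu₂⟩ : ∃ ε₂ : ℝ, (ε₂ = 1 ∨ ε₂ = -1) ∧ ∀ t ∈ Ioo τ τ', u₂ t = ε₂ := by
    rcases bang_sign_const φ₂ τ τ' hττ' hc₂ (fun t ht => (hreg t ht).2) with hp | hn
    · exact ⟨1, Or.inl rfl, fun t ht => by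
        rw [hsign₂ t (hreg t ht).2, Real.sign_of_pos (hp t ht)]⟩
    · exact ⟨-1, Or.inr rfl, fun t ht => by
        rw [hsign₂ t (hreg t ht).2, Real.sign_of_neg (hn t ht)]⟩
  -- almost every point of (τ, τ'] is in the open interval
  have hae : ∀ᵐ r : ℝ, r ≠ τ' := by
    have hset : {r : ℝ | ¬ r ≠ τ'} = {τ'} := by ext; simp
    rw [ae_iff, hset]; exact measure_singleton _
  -- compute the integrals over the arc
  have hI₂ : φ₂ τ' = φ₂ τ + (τ' - τ) * (ε₁ * a) := by
    have hcongr : (∫ r in τ..τ', u₁ r * a) = ∫ r in τ..τ', ε₁ * a := by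
      refine intervalIntegral.integral_congr_ae ?_
      filter_upwards [hae] with r hr hmem
      rw [uIoc_of_le hττ'.le] at hmem
      have : r ∈ Ioo τ τ' := ⟨hmem.1, lt_of_le_of_ne hmem.2 hr⟩
      rw [hu₁ r this]
    rw [hφ₂' τ τ', hcongr, intervalIntegral.integral_const, smul_eq_mul]
  have hI₁ : φ₁ τ' = φ₁ τ - (τ' - τ) * (ε₂ * a) := by
    have hcongr : (∫ r in τ..τ', -(u₂ r * a)) = ∫ r in τ..τ', -(ε₂ * a) := by
      refine intervalIntegral.integral_congr_ae ?_
      filter_upwards [hae] with r hr hmem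
      rw [uIoc_of_le hττ'.le] at hmem
      have : r ∈ Ioo τ τ' := ⟨hmem.1, lt_of_le_of_ne hmem.2 hr⟩
      rw [hu₂ r this]
    rw [hφ₁' τ τ', hcongr, intervalIntegral.integral_const, smul_eq_mul]
    ring
  have hτne : τ' - τ ≠ 0 := by linarith
  have habs : |a| ≠ 0 := abs_ne_zero.2 ha
  -- case analysis on which switching function vanishes at the endpoints
  rcases hstart with h₁ | h₂
  · -- φ₁ τ = 0 ; then φ₂ must vanish at τ'
    have h₂' : φ₂ τ' = 0 := by
      rcases hend with h₁' | h₂'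
      · exfalso
        rw [hI₁, h₁, zero_sub, neg_eq_zero] at h₁'
        rcases hε₂ with rfl | rfl <;> [skip; skip] <;>
          simp only [one_mul, neg_one_mul, mul_neg, neg_eq_zero] at h₁' <;>
          exact (mul_ne_zero hτne ha) h₁'
      · exact h₂'
    have hlam : lam₀ = |φ₂ τ| := by
      have := hmax τ; rw [h₁, abs_zero, zero_add] at this; exact this.symm
    have hφ₂τ : φ₂ τ = -(τ' - τ) * (ε₁ * a) := by
      rw [hI₂] at h₂'; linarith
    rw [hlam, hφ₂τ]
    have : |(-(τ' - τ) * (ε₁ * a))| = (τ' - τ) * |a| := by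
      rcases hε₁ with rfl | rfl <;>
        rw [abs_mul, abs_neg, abs_of_pos (by linarith : (0:ℝ) < τ' - τ), abs_mul] <;>
        simp
    rw [this]
    field_simp
  · -- φ₂ τ = 0 ; then φ₁ must vanish at τ'
    have h₁' : φ₁ τ' = 0 := by
      rcases hend with h₁' | h₂'
      · exact h₁'
      · exfalso
        rw [hI₂, h₂, zero_add] at h₂'
        rcases hε₁ with rfl | rfl <;>
          simp only [one_mul, neg_one_mul, mul_neg, neg_eq_zero] at h₂' <;>
          exact (mul_ne_zero hτne ha) h₂'
    have hlam : lam₀ = |φ₁ τ| := by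
      have := hmax τ; rw [h₂, abs_zero, add_zero] at this; exact this.symm
    have hφ₁τ : φ₁ τ = (τ' - τ) * (ε₂ * a) := by
      rw [hI₁] at h₁'; linarith
    rw [hlam, hφ₁τ]
    have : |(τ' - τ) * (ε₂ * a)| = (τ' - τ) * |a| := by
      rcases hε₂ with rfl | rfl <;>
        rw [abs_mul, abs_of_pos (by linarith : (0:ℝ) < τ' - τ), abs_mul] <;>
        simp
    rw [this]
    field_simp
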